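/- Let G be a finite abelian group with |G| ≥ 3 satisfying Property P, witnessed by g₁, g₂ ∈ G and atoms U₁, U₂ of length D(G) with g₁g₂ | U₁ and (g₁+g₂) | U₂. Then for A' = (−U₁)U₁(−U₂)U₂ one has ρ(L(A')) = D(G)/2, min L(A') + 1 ∈ L(A'), and max L(A') − 1 ∈ L(A'). -/

import Mathlib

def IsMinZS {G : Type*} [AddCommGroup G] (U : Multiset G) : Prop :=
  U ≠ 0 ∧ U.sum = 0 ∧ ∀ V ≤ U, V ≠ 0 → V.sum = 0 → V = U

noncomputable def DavC (G : Type*) [AddCommGroup G] : ℕ :=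
  sSup {n | ∃ U : Multiset G, IsMinZS U ∧ U.card = n}

def LSet {G : Type*} [AddCommGroup G] (A : Multiset G) : Set ℕ :=
  {k | ∃ l : Multiset (Multiset G), l.card = k ∧ (∀ U ∈ l, IsMinZS U) ∧ l.sum = A}

noncomputable def rhoSet (L : Set ℕ) : ℚ := ((sSup L : ℕ) : ℚ) / ((sInf L : ℕ) : ℚ)

def IsIntervalSet (L : Set ℕ) : Prop := L.Nonempty ∧ L = Set.Icc (sInf L) (sSup L)

section Aux

variable {G : Type*} [AddCommGroup G]

lemma card_sum' (l : Multiset (Multiset G)) : l.sum.card = (l.map Multiset.card).sum :=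
  Multiset.induction_on l (by simp) (by intro a s ih; simp [ih])

lemma sub_sum_of_le [DecidableEq G] {U P : Multiset G} (h : P ≤ U) :
    (U - P).sum = U.sum - P.sum := by
  have h1 : (U - P) + P = U := tsub_add_cancel_of_le h
  have h2 : (U - P).sum + P.sum = U.sum := by rw [← Multiset.sum_add, h1]
  exact eq_sub_of_add_eq h2

lemma minzs_neg {U : Multiset G} (h : IsMinZS U) : IsMinZS (U.map fun x => -x) := by
  obtain ⟨h0, hs, hmin⟩ := h
  refine ⟨by simpa using h0, ?_, ?_⟩
  · rw [show (fun x : G => -x) = Neg.neg from rfl, Multiset.sum_map_neg', hs, neg_zero]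
  · intro V hV hV0 hVs
    have key : (V.map fun x => -x) = U := by
      apply hmin
      · have h2 := Multiset.map_le_map (f := fun x : G => -x) hV
        simpa [Multiset.map_map, Function.comp] using h2
      · simpa using hV0
      · rw [show (fun x : G => -x) = Neg.neg from rfl, Multiset.sum_map_neg', hVs, neg_zero]
    calc V = (V.map fun x => -x).map fun x => -x := by simp [Multiset.map_map]
    _ = U.map fun x => -x := by rw [key]

lemma pair_minzs {t : G} (ht : t ≠ 0) : IsMinZS ({-t, t} : Multiset G) := by
  refine ⟨by simp, by simp, ?_⟩
  intro V hV hV0 hVs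
  have hcV : V.card ≤ 2 := by simpa using Multiset.card_le_card hV
  have hpos : 0 < V.card := Multiset.card_pos.mpr hV0
  rcases Nat.lt_or_ge V.card 2 with h | h
  · exfalso
    have h1 : V.card = 1 := by omega
    obtain ⟨a, rfl⟩ := Multiset.card_eq_one.mp h1
    have ha : a ∈ ({-t, t} : Multiset G) := Multiset.mem_of_le hV (Multiset.mem_singleton_self a)
    have ha0 : a = 0 := by simpa using hVs
    rcases Multiset.mem_cons.mp ha with h' | h'
    · exact ht (by rw [← neg_neg t, ← h', ha0, neg_zero])
    · exact ht (by rw [← Multiset.mem_singleton.mp h', ha0])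
  · exact Multiset.eq_of_le_of_card_le hV (by simpa using h)

lemma minzs_exchange [DecidableEq G] {U P : Multiset G} (hU : IsMinZS U) (hP : P ≤ U)
    (hP0 : P ≠ 0) : IsMinZS ((U - P) + {P.sum}) := by
  obtain ⟨hU0, hUs, hUmin⟩ := hU
  have hPcard : 0 < P.card := Multiset.card_pos.mpr hP0
  have hPU : P.card ≤ U.card := Multiset.card_le_card hP
  have hsub : (U - P).sum = - P.sum := by rw [sub_sum_of_le hP, hUs, zero_sub]
  refine ⟨?_, ?_, ?_⟩
  · have hcc : 0 < ((U - P) + {P.sum}).card := by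
      rw [Multiset.card_add, Multiset.card_singleton]; omega
    exact fun hc => by simp [hc] at hcc
  · rw [Multiset.sum_add, hsub, Multiset.sum_singleton, neg_add_cancel]
  · intro Z hZ hZ0 hZs
    have hdecomp : (Z - (U - P)) + (Z ∩ (U - P)) = Z := Multiset.sub_add_inter Z (U - P)
    have hZ₂ : Z - (U - P) ≤ {P.sum} := tsub_le_iff_right.mpr (by rwa [add_comm] at hZ)
    have hZ₁ : Z ∩ (U - P) ≤ U - P := Multiset.inter_le_right
    rcases Multiset.le_singleton.mp hZ₂ with h2 | h2
    · exfalso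
      have hZeq : Z = Z ∩ (U - P) := by conv_lhs => rw [← hdecomp, h2, zero_add]
      have hZle : Z ≤ U := by rw [hZeq]; exact hZ₁.trans tsub_le_self
      have hZU := hUmin Z hZle hZ0 hZs
      have hcZ : Z.card ≤ (U - P).card := by
        conv_lhs => rw [hZeq]
        exact Multiset.card_le_card hZ₁
      rw [hZU, Multiset.card_sub hP] at hcZ
      omega
    · have hZsum : Z.sum = P.sum + (Z ∩ (U - P)).sum := by
        conv_lhs => rw [← hdecomp, h2]
        rw [Multiset.sum_add, Multiset.sum_singleton]
      have hZ' : (Z ∩ (U - P)) + P = U := by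
        apply hUmin
        · calc (Z ∩ (U - P)) + P ≤ (U - P) + P := add_le_add hZ₁ le_rfl
          _ = U := tsub_add_cancel_of_le hP
        · intro hc
          apply hP0
          have hple : P ≤ (Z ∩ (U - P)) + P := le_add_self
          rw [hc] at hple
          exact Multiset.le_zero.mp hple
        · rw [Multiset.sum_add, add_comm, ← hZsum]
          exact hZs
      have hZ₁eq : Z ∩ (U - P) = U - P := by
        have h' : (Z ∩ (U - P)) + P = (U - P) + P := by rw [hZ', tsub_add_cancel_of_le hP]
        exact add_right_cancel h'
      rw [← hdecomp, h2, hZ₁eq, add_comm]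

lemma exists_minzs_le (B : Multiset G) : B ≠ 0 → B.sum = 0 → ∃ V, V ≤ B ∧ IsMinZS V := by
  induction B using Multiset.strongInductionOn with
  | _ B ih =>
    intro hB0 hBs
    by_cases h : ∀ V ≤ B, V ≠ 0 → V.sum = 0 → V = B
    · exact ⟨B, le_refl B, hB0, hBs, h⟩
    · push_neg at h
      obtain ⟨V, hVB, hV0, hVs, hVne⟩ := h
      obtain ⟨W, hWV, hW⟩ := ih V (lt_of_le_of_ne hVB hVne) hV0 hVs
      exact ⟨W, hWV.trans hVB, hW⟩

lemma two_count_le_card {α : Type*} [DecidableEq α] (P : Multiset α) {a b : α} (hab : a ≠ b) :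
    P.count a + P.count b ≤ P.card := by
  have h : Multiset.replicate (P.count a) a + Multiset.replicate (P.count b) b ≤ P := by
    rw [Multiset.le_iff_count]
    intro x
    rw [Multiset.count_add, Multiset.count_replicate, Multiset.count_replicate]
    by_cases hxa : a = x <;> by_cases hxb : b = x
    · exact absurd (hxa.trans hxb.symm) hab
    · rw [if_pos hxa, if_neg hxb, add_zero, hxa]
    · rw [if_neg hxa, if_pos hxb, zero_add, hxb]
    · rw [if_neg hxa, if_neg hxb]
      simp
  simpa using Multiset.card_le_card h

lemma three_count_le_card {α : Type*} [DecidableEq α] (P : Multiset α) {a b c : α}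
    (hab : a ≠ b) (hac : a ≠ c) (hbc : b ≠ c) :
    P.count a + P.count b + P.count c ≤ P.card := by
  have h : Multiset.replicate (P.count a) a + Multiset.replicate (P.count b) b
      + Multiset.replicate (P.count c) c ≤ P := by
    rw [Multiset.le_iff_count]
    intro x
    rw [Multiset.count_add, Multiset.count_add, Multiset.count_replicate,
      Multiset.count_replicate, Multiset.count_replicate]
    by_cases hxa : a = x <;> by_cases hxb : b = x <;> by_cases hxc : c = x
    · exact absurd (hxa.trans hxb.symm) hab
    · exact absurd (hxa.trans hxb.symm) hab
    · exact absurd (hxa.trans hxc.symm) hac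
    · rw [if_pos hxa, if_neg hxb, if_neg hxc, add_zero, add_zero, hxa]
    · exact absurd (hxb.trans hxc.symm) hbc
    · rw [if_neg hxa, if_pos hxb, if_neg hxc, zero_add, add_zero, hxb]
    · rw [if_neg hxa, if_neg hxb, if_pos hxc, zero_add, zero_add, hxc]
    · rw [if_neg hxa, if_neg hxb, if_neg hxc]
      simp
  simpa using Multiset.card_le_card h

lemma three_parts [DecidableEq G] {M P X₁ X₂ X₃ : Multiset G}
    (h : X₁ + X₂ + X₃ = M + P) (hP : P.card = 2) :
    X₁ ≤ M ∨ X₂ ≤ M ∨ X₃ ≤ M := by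
  by_contra hc
  push_neg at hc
  obtain ⟨h1, h2, h3⟩ := hc
  have hex : ∀ X : Multiset G, ¬ X ≤ M → ∃ e, M.count e < X.count e := by
    intro X hX
    by_contra h'
    push_neg at h'
    exact hX (Multiset.le_iff_count.mpr h')
  obtain ⟨e₁, he₁⟩ := hex _ h1
  obtain ⟨e₂, he₂⟩ := hex _ h2
  obtain ⟨e₃, he₃⟩ := hex _ h3
  have hcnt : ∀ e, X₁.count e + X₂.count e + X₃.count e = M.count e + P.count e := by
    intro e
    rw [← Multiset.count_add, ← Multiset.count_add, ← Multiset.count_add, h]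
  rcases eq_or_ne e₁ e₂ with h12 | h12 <;> rcases eq_or_ne e₁ e₃ with h13 | h13
  · subst h12; subst h13
    have hc1 := hcnt e₁
    have hc2 := Multiset.count_le_card e₁ P
    omega
  · subst h12
    have hc1 := hcnt e₁
    have hc3 := hcnt e₃
    have hc4 := two_count_le_card P h13
    omega
  · subst h13
    have hc1 := hcnt e₁
    have hc2 := hcnt e₂
    have hc4 := two_count_le_card P h12
    omega
  · rcases eq_or_ne e₂ e₃ with h23 | h23
    · subst h23
      have hc1 := hcnt e₁
      have hc2 := hcnt e₂
      have hc4 := two_count_le_card P h12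
      omega
    · have hc1 := hcnt e₁
      have hc2 := hcnt e₂
      have hc3 := hcnt e₃
      have hc4 := three_count_le_card P h12 h13 h23
      omega

lemma split_two [DecidableEq G] {U P : Multiset G} (hU : IsMinZS U)
    (hmax : ∀ V : Multiset G, IsMinZS V → V.card ≤ U.card)
    {u : G} (hu : u ∈ U) (hPc : P.card = 2) (hPs : P.sum = u) :
    ∃ V C : Multiset G, IsMinZS V ∧ IsMinZS C ∧ V + C = (U - {u}) + P := by
  obtain ⟨hU0, hUs, hUmin⟩ := hU
  have hu_le : ({u} : Multiset G) ≤ U := Multiset.singleton_le.mpr hu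
  have hcU : 1 ≤ U.card := by
    have := Multiset.card_pos.mpr hU0
    omega
  have hSsum : (U - {u}).sum = -u := by
    rw [sub_sum_of_le hu_le, hUs, Multiset.sum_singleton, zero_sub]
  have hstar : ∀ Z : Multiset G, Z ≤ U - {u} → Z ≠ 0 → Z.sum = 0 → False := by
    intro Z hZ hZ0 hZs
    have hZU : Z ≤ U := hZ.trans tsub_le_self
    have hZeq := hUmin Z hZU hZ0 hZs
    have hcZ := Multiset.card_le_card hZ
    rw [hZeq, Multiset.card_sub hu_le, Multiset.card_singleton] at hcZ
    omega
  have hBsum : ((U - {u}) + P).sum = 0 := by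
    rw [Multiset.sum_add, hSsum, hPs, neg_add_cancel]
  have hBcard : ((U - {u}) + P).card = U.card + 1 := by
    rw [Multiset.card_add, Multiset.card_sub hu_le, Multiset.card_singleton, hPc]
    omega
  have hB0 : (U - {u}) + P ≠ 0 := by
    intro hc
    rw [hc] at hBcard
    simp at hBcard
  obtain ⟨V, hVB, hVa⟩ := exists_minzs_le _ hB0 hBsum
  refine ⟨V, ((U - {u}) + P) - V, hVa, ?_, add_tsub_cancel_of_le hVB⟩
  have hC0 : ((U - {u}) + P) - V ≠ 0 := by
    intro hc
    have hBV : (U - {u}) + P ≤ V := tsub_eq_zero_iff_le.mp hc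
    have hVeq : V = (U - {u}) + P := le_antisymm hVB hBV
    have hm := hmax V hVa
    rw [hVeq, hBcard] at hm
    omega
  have hCsum : (((U - {u}) + P) - V).sum = 0 := by
    rw [sub_sum_of_le hVB, hBsum, hVa.2.1, sub_zero]
  refine ⟨hC0, hCsum, ?_⟩
  intro Z hZC hZ0 hZs
  by_contra hZne
  have hCZ0 : ((((U - {u}) + P) - V) - Z) ≠ 0 := by
    intro hc
    exact hZne (le_antisymm hZC (tsub_eq_zero_iff_le.mp hc))
  have hCZsum : ((((U - {u}) + P) - V) - Z).sum = 0 := by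
    rw [sub_sum_of_le hZC, hCsum, hZs, sub_zero]
  have hdecomp : V + Z + ((((U - {u}) + P) - V) - Z) = (U - {u}) + P := by
    rw [add_assoc, add_tsub_cancel_of_le hZC, add_tsub_cancel_of_le hVB]
  rcases three_parts hdecomp hPc with h | h | h
  · exact hstar V h hVa.1 hVa.2.1
  · exact hstar Z h hZ0 hZs
  · exact hstar _ h hCZ0 hCZsum

lemma minzs_card_le_fintype [Fintype G] {U : Multiset G} (h : IsMinZS U) :
    U.card ≤ Fintype.card G := by
  obtain ⟨h0, hs, hmin⟩ := h
  set l := U.toList with hl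
  have hlU : (l : Multiset G) = U := Multiset.coe_toList U
  have hcard : U.card = l.length := by rw [← hlU]; simp
  rw [hcard]
  have key : ∀ i j : Fin l.length, (i : ℕ) < (j : ℕ) →
      (l.take (i : ℕ)).sum ≠ (l.take (j : ℕ)).sum := by
    intro i j hlt hij
    set seg := (l.drop (i : ℕ)).take ((j : ℕ) - (i : ℕ)) with hseg
    have hsplit : l.take (j : ℕ) = l.take (i : ℕ) ++ seg := by
      rw [hseg, ← List.take_add, Nat.add_sub_cancel' (le_of_lt hlt)]
    have hsegsum : seg.sum = 0 := by
      have h1 : (l.take (i : ℕ)).sum + seg.sum = (l.take (i : ℕ)).sum := by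
        conv_rhs => rw [hij, hsplit]
        rw [List.sum_append]
      have h2 : (l.take (i : ℕ)).sum + seg.sum = (l.take (i : ℕ)).sum + 0 := by
        rw [add_zero]; exact h1
      exact add_left_cancel h2
    have hseglen : seg.length = (j : ℕ) - (i : ℕ) := by
      rw [hseg, List.length_take, List.length_drop]
      have := j.isLt
      omega
    have hsegne : seg ≠ [] := by
      intro hnil
      rw [hnil] at hseglen
      simp at hseglen
      omega
    have hle : (seg : Multiset G) ≤ U := by
      rw [← hlU]
      exact Multiset.coe_le.mpr
        (((List.take_sublist _ _).trans (List.drop_sublist _ _)).subperm)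
    have hZeq := hmin _ hle (by simpa using hsegne) (by simpa using hsegsum)
    have hcZ : seg.length = l.length := by
      have hc := congrArg Multiset.card hZeq
      simpa [hcard] using hc
    have := j.isLt
    omega
  have hinj : Function.Injective (fun i : Fin l.length => (l.take (i : ℕ)).sum) := by
    intro i j hij
    by_contra hne
    have hne' : (i : ℕ) ≠ (j : ℕ) := fun hc => hne (Fin.val_injective hc)
    rcases Nat.lt_or_ge (i : ℕ) (j : ℕ) with h' | h'
    · exact key i j h' hij
    · exact key j i (by omega) hij.symm
  simpa using Fintype.card_le_of_injective _ hinj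

end Aux

theorem stmt13 {G : Type*} [AddCommGroup G] [Fintype G] (hcard : 3 ≤ Fintype.card G)
    (g₁ g₂ : G) (U₁ U₂ : Multiset G)
    (h1 : IsMinZS U₁) (h2 : IsMinZS U₂)
    (hc1 : U₁.card = DavC G) (hc2 : U₂.card = DavC G)
    (hd1 : ({g₁, g₂} : Multiset G) ≤ U₁) (hd2 : (g₁ + g₂) ∈ U₂) :
    ∀ A' : Multiset G,
      A' = U₁.map (fun x => -x) + U₁ + U₂.map (fun x => -x) + U₂ →
      rhoSet (LSet A') = (DavC G : ℚ) / 2 ∧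
      sInf (LSet A') + 1 ∈ LSet A' ∧
      sSup (LSet A') - 1 ∈ LSet A' := by
  classical
  intro A' hA'
  set D := DavC G with hD
  set u := g₁ + g₂ with hu
  have hbdd : BddAbove {n | ∃ U : Multiset G, IsMinZS U ∧ U.card = n} := by
    refine ⟨Fintype.card G, ?_⟩
    rintro n ⟨U, hU, rfl⟩
    exact minzs_card_le_fintype hU
  have hmax : ∀ V : Multiset G, IsMinZS V → V.card ≤ D :=
    fun V hV => le_csSup hbdd ⟨V, hV, rfl⟩
  have hnt : Nontrivial G := Fintype.one_lt_card_iff_nontrivial.mp (by omega)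
  obtain ⟨g, hg⟩ := exists_ne (0 : G)
  have hD2 : 2 ≤ D := by
    have h2mem : (2 : ℕ) ∈ {n | ∃ U : Multiset G, IsMinZS U ∧ U.card = n} :=
      ⟨{-g, g}, pair_minzs hg, by simp⟩
    exact le_csSup hbdd h2mem
  have h0U1 : (0 : G) ∉ U₁ := by
    intro h0
    have heq := h1.2.2 {0} (Multiset.singleton_le.mpr h0) (by simp) (by simp)
    have hcc := congrArg Multiset.card heq
    simp [hc1] at hcc
    omega
  have h0U2 : (0 : G) ∉ U₂ := by
    intro h0
    have heq := h2.2.2 {0} (Multiset.singleton_le.mpr h0) (by simp) (by simp)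
    have hcc := congrArg Multiset.card heq
    simp [hc2] at hcc
    omega
  have hg₁ : g₁ ∈ U₁ := Multiset.mem_of_le hd1 (by simp)
  have hg₂ : g₂ ∈ U₁ := Multiset.mem_of_le hd1 (by simp)
  have hg₁0 : g₁ ≠ 0 := fun hc => h0U1 (hc ▸ hg₁)
  have hg₂0 : g₂ ≠ 0 := fun hc => h0U1 (hc ▸ hg₂)
  have hu0 : u ≠ 0 := fun hc => h0U2 (hc ▸ hd2)
  have h0A : (0 : G) ∉ A' := by
    rw [hA']
    intro h
    simp only [Multiset.mem_add, Multiset.mem_map] at h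
    rcases h with ((⟨x, hx, hx0⟩ | h) | ⟨x, hx, hx0⟩) | h
    · exact h0U1 (neg_eq_zero.mp hx0 ▸ hx)
    · exact h0U1 h
    · exact h0U2 (neg_eq_zero.mp hx0 ▸ hx)
    · exact h0U2 h
  have hcA : A'.card = 4 * D := by
    rw [hA']
    simp only [Multiset.card_add, Multiset.card_map, hc1, hc2]
    ring
  have hbound : ∀ k ∈ LSet A', 4 ≤ k ∧ k ≤ 2 * D := by
    rintro k ⟨l, hlc, hlatom, hlsum⟩
    have hcardsum : (l.map Multiset.card).sum = 4 * D := by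
      rw [← card_sum' l, hlsum, hcA]
    have hup : ∀ c ∈ l.map Multiset.card, c ≤ D := by
      rintro c hc
      obtain ⟨U, hUl, rfl⟩ := Multiset.mem_map.mp hc
      exact hmax U (hlatom U hUl)
    have hlow : ∀ c ∈ l.map Multiset.card, 2 ≤ c := by
      rintro c hc
      obtain ⟨U, hUl, rfl⟩ := Multiset.mem_map.mp hc
      have hUatom := hlatom U hUl
      have hUle : U ≤ A' := by rw [← hlsum]; exact Multiset.le_sum_of_mem hUl
      by_contra hcc
      push_neg at hcc
      have hpos : 0 < U.card := Multiset.card_pos.mpr hUatom.1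
      have hone : U.card = 1 := by omega
      obtain ⟨a, rfl⟩ := Multiset.card_eq_one.mp hone
      have ha0 : a = 0 := by simpa using hUatom.2.1
      exact h0A (ha0 ▸ Multiset.mem_of_le hUle (Multiset.mem_singleton_self a))
    have hup' := Multiset.sum_le_card_nsmul (l.map Multiset.card) D hup
    have hlow' := Multiset.card_nsmul_le_sum hlow
    rw [hcardsum, Multiset.card_map, hlc, smul_eq_mul] at hup' hlow'
    constructor
    · exact Nat.le_of_mul_le_mul_right hup' (by omega)
    · omega
  have hmem4 : 4 ∈ LSet A' := by
    refine ⟨{U₁.map (fun x => -x), U₁, U₂.map (fun x => -x), U₂}, by simp, ?_, ?_⟩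
    · intro U hU
      simp only [Multiset.insert_eq_cons, Multiset.mem_cons, Multiset.mem_singleton] at hU
      rcases hU with rfl | rfl | rfl | rfl
      exacts [minzs_neg h1, h1, minzs_neg h2, h2]
    · simp only [Multiset.insert_eq_cons, Multiset.sum_cons, Multiset.sum_singleton]
      rw [hA']
      abel
  have pairsum : ∀ S : Multiset G,
      (S.map (fun t => ({-t, t} : Multiset G))).sum = S.map (fun x => -x) + S := by
    intro S
    induction S using Multiset.induction_on with
    | empty => simp
    | cons a s ih =>
      rw [Multiset.map_cons, Multiset.sum_cons, ih, Multiset.map_cons,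
        Multiset.insert_eq_cons]
      simp only [← Multiset.singleton_add]
      abel
  have hmem2D : 2 * D ∈ LSet A' := by
    refine ⟨U₁.map (fun t => ({-t, t} : Multiset G)) + U₂.map (fun t => ({-t, t} : Multiset G)),
      ?_, ?_, ?_⟩
    · rw [Multiset.card_add, Multiset.card_map, Multiset.card_map, hc1, hc2]
      omega
    · intro U hU
      rcases Multiset.mem_add.mp hU with h | h <;>
        obtain ⟨t, ht, rfl⟩ := Multiset.mem_map.mp h
      · exact pair_minzs (fun hc => h0U1 (hc ▸ ht))
      · exact pair_minzs (fun hc => h0U2 (hc ▸ ht))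
    · rw [Multiset.sum_add, pairsum, pairsum, hA']
      abel
  -- key submultisets
  set T := U₁ - {g₁, g₂} with hT
  set S2 := U₂ - {u} with hS2
  have hu_le : ({u} : Multiset G) ≤ U₂ := Multiset.singleton_le.mpr hd2
  have hU1split : T + ({g₁, g₂} : Multiset G) = U₁ := tsub_add_cancel_of_le hd1
  have hU2split : S2 + ({u} : Multiset G) = U₂ := tsub_add_cancel_of_le hu_le
  have hpairsum_eq : ({g₁, g₂} : Multiset G).sum = u := by simp [hu]
  have hTsum : T.sum = -u := by
    rw [hT, sub_sum_of_le hd1, h1.2.1, hpairsum_eq, zero_sub]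
  have hTne : T ≠ 0 := by
    intro hc
    have hU1eq : U₁ = ({g₁, g₂} : Multiset G) := by rw [← hU1split, hc, zero_add]
    apply hu0
    rw [← hpairsum_eq, ← hU1eq, h1.2.1]
  have hXatom : IsMinZS (T + ({u} : Multiset G)) := by
    have hx := minzs_exchange h1 hd1 (by
      intro hc
      have := congrArg Multiset.card hc
      simp at this)
    rwa [hpairsum_eq] at hx
  have hU1mT : U₁ - T = ({g₁, g₂} : Multiset G) := by
    rw [hT]; exact tsub_tsub_cancel_of_le hd1
  have hnegW : IsMinZS (({g₁, g₂} : Multiset G) + ({-u} : Multiset G)) := by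
    have hx := minzs_exchange h1 (tsub_le_self : T ≤ U₁) hTne
    rwa [hTsum, hU1mT] at hx
  have hW : IsMinZS ((({g₁, g₂} : Multiset G) + ({-u} : Multiset G)).map (fun x => -x)) :=
    minzs_neg hnegW
  -- split -U₂ + replacement into two atoms
  have hU2n : IsMinZS (U₂.map fun x => -x) := minzs_neg h2
  have hmax' : ∀ V : Multiset G, IsMinZS V → V.card ≤ (U₂.map fun x => -x).card := by
    intro V hV
    rw [Multiset.card_map, hc2]
    exact hmax V hV
  have hnegu_mem : -u ∈ U₂.map (fun x => -x) := Multiset.mem_map_of_mem _ hd2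
  have hnegu_le : ({-u} : Multiset G) ≤ U₂.map (fun x => -x) :=
    Multiset.singleton_le.mpr hnegu_mem
  obtain ⟨V, C, hVa, hCa, hVC⟩ := split_two hU2n hmax' hnegu_mem
    (P := ({-g₁, -g₂} : Multiset G)) (by simp) (by
      rw [hu]
      simp only [Multiset.insert_eq_cons, Multiset.sum_cons, Multiset.sum_singleton]
      abel)
  have hmem5 : 5 ∈ LSet A' := by
    refine ⟨{U₁, U₂, (T + ({u} : Multiset G)).map (fun x => -x), V, C}, by simp, ?_, ?_⟩
    · intro U hU
      simp only [Multiset.insert_eq_cons, Multiset.mem_cons, Multiset.mem_singleton] at hU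
      rcases hU with rfl | rfl | rfl | rfl | rfl
      exacts [h1, h2, minzs_neg hXatom, hVa, hCa]
    · obtain ⟨K, hK⟩ : ∃ K, U₂.map (fun x => -x) - ({-u} : Multiset G) = K := ⟨_, rfl⟩
      have hVC' : V + C = K + ({-g₁, -g₂} : Multiset G) := by rw [← hK]; exact hVC
      have e2 : U₂.map (fun x => -x) = K + ({-u} : Multiset G) := by
        rw [← hK]; exact (tsub_add_cancel_of_le hnegu_le).symm
      have e1 : U₁.map (fun x => -x) = T.map (fun x => -x) + ({-g₁, -g₂} : Multiset G) := by
        conv_lhs => rw [← hU1split]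
        rw [Multiset.map_add]
        congr 1
      simp only [Multiset.insert_eq_cons, Multiset.sum_cons, Multiset.sum_singleton]
      rw [hVC', hA', e1, e2, Multiset.map_add, Multiset.map_singleton]
      abel
  have hcT : T.card = D - 2 := by
    rw [hT, Multiset.card_sub hd1, hc1]
    simp [Multiset.insert_eq_cons]
  have hcS2 : S2.card = D - 1 := by
    rw [hS2, Multiset.card_sub hu_le, hc2, Multiset.card_singleton]
  have hmem2Dm1 : 2 * D - 1 ∈ LSet A' := by
    refine ⟨((({g₁, g₂} : Multiset G) + ({-u} : Multiset G)).map (fun x => -x)) ::ₘ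
      ((({g₁, g₂} : Multiset G) + ({-u} : Multiset G)) ::ₘ
      (T.map (fun t => ({-t, t} : Multiset G)) + S2.map (fun t => ({-t, t} : Multiset G)))),
      ?_, ?_, ?_⟩
    · simp only [Multiset.card_cons, Multiset.card_add, Multiset.card_map, hcT, hcS2]
      omega
    · intro U hU
      rcases Multiset.mem_cons.mp hU with rfl | hU
      · exact hW
      rcases Multiset.mem_cons.mp hU with rfl | hU
      · exact hnegW
      rcases Multiset.mem_add.mp hU with h | h <;>
        obtain ⟨t, ht, rfl⟩ := Multiset.mem_map.mp h
      · have htU : t ∈ U₁ := Multiset.mem_of_le (hT ▸ tsub_le_self) ht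
        exact pair_minzs (fun hc => h0U1 (hc ▸ htU))
      · have htU : t ∈ U₂ := Multiset.mem_of_le (hS2 ▸ tsub_le_self) ht
        exact pair_minzs (fun hc => h0U2 (hc ▸ htU))
    · rw [Multiset.sum_cons, Multiset.sum_cons, Multiset.sum_add, pairsum, pairsum, hA',
        ← hU1split, ← hU2split]
      simp only [Multiset.map_add, Multiset.map_singleton, Multiset.insert_eq_cons,
        Multiset.map_cons, neg_neg]
      abel
  have hne : (LSet A').Nonempty := ⟨4, hmem4⟩
  have hInf : sInf (LSet A') = 4 :=
    le_antisymm (Nat.sInf_le hmem4) (le_csInf hne fun k hk => (hbound k hk).1)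
  have hSup : sSup (LSet A') = 2 * D :=
    le_antisymm (csSup_le hne fun k hk => (hbound k hk).2)
      (le_csSup ⟨2 * D, fun k hk => (hbound k hk).2⟩ hmem2D)
  refine ⟨?_, ?_, ?_⟩
  · simp only [rhoSet]
    rw [hSup, hInf]
    push_cast
    rw [div_eq_div_iff (by norm_num) (by norm_num)]
    ring
  · rw [hInf]
    exact hmem5
  · rw [hSup]
    exact hmem2Dm1
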